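/- arXiv:0903.0022 — 3 statements merged into one kernel-verified Lean document; each statement's English description precedes it below -/
import Mathlib

section
/- Let (ξ_i) be i.i.d. integrable random variables with Eξ_0 > 0 and let S(i) = ξ_1 + ⋯ + ξ_i. Let (e_i) be i.i.d. with E log⁺|e_0| < ∞. Then the series Σ_{i=1}^∞ e^{−S(i)} |e_i| converges almost surely. -/
open MeasureTheory ProbabilityTheory Filter Topology

private lemma sum_Icc_one_eq (f : ℕ → ℝ) : ∀ n, ∑ j ∈ Finset.Icc 1 n, f j
    = ∑ j ∈ Finset.range n, f (j + 1) := by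
  intro n
  induction n with
  | zero => simp
  | succ n ih =>
    rw [Finset.sum_Icc_succ_top (Nat.one_le_iff_ne_zero.2 (Nat.succ_ne_zero n)),
      Finset.sum_range_succ, ih]

set_option maxHeartbeats 1000000 in
theorem stmt_7 {Ω : Type*} [MeasurableSpace Ω] (μ : Measure Ω) [IsProbabilityMeasure μ]
    (ξ e : ℕ → Ω → ℝ)
    (hξmeas : ∀ i, Measurable (ξ i)) (hemeas : ∀ i, Measurable (e i))
    (hξindep : iIndepFun ξ μ)
    (hξident : ∀ i, IdentDistrib (ξ i) (ξ 0) μ μ)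
    (hξint : Integrable (ξ 0) μ) (hξmean : 0 < ∫ ω, ξ 0 ω ∂μ)
    (heindep : iIndepFun e μ)
    (heident : ∀ i, IdentDistrib (e i) (e 0) μ μ)
    (helog : Integrable (fun ω => max (Real.log |e 0 ω|) 0) μ) :
    ∀ᵐ ω ∂μ, Summable (fun i : ℕ =>
      Real.exp (-(∑ j ∈ Finset.Icc 1 (i + 1), ξ j ω)) * |e (i + 1) ω|) := by
  set m : ℝ := ∫ ω, ξ 0 ω ∂μ with hm
  have hm4 : (0:ℝ) < m / 4 := by linarith
  -- the log⁺ of the e's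
  set Y : ℕ → Ω → ℝ := fun n ω => max (Real.log |e n ω|) 0 with hY
  have hYmeas : ∀ n, Measurable (Y n) := fun n =>
    ((Real.measurable_log.comp (hemeas n).abs).max measurable_const)
  have hYident : ∀ n, IdentDistrib (Y n) (Y 0) μ μ := fun n =>
    (heident n).comp ((Real.measurable_log.comp measurable_abs).max measurable_const)
  -- strong law of large numbers
  have hslln : ∀ᵐ ω ∂μ, Tendsto (fun n : ℕ => (∑ i ∈ Finset.range n, ξ i ω) / n)
      atTop (𝓝 m) := by
    exact strong_law_ae_real ξ hξint (fun i j hij => hξindep.indepFun hij) hξident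
  -- Borel–Cantelli for the e's
  have hBC : ∀ᵐ ω ∂μ, ∀ᶠ n : ℕ in atTop, ω ∉ {ω' | Y n ω' ∈ Set.Ioi (m / 4 * (n : ℝ))} := by
    apply ae_eventually_notMem
    letI : MeasureSpace Ω := ⟨μ⟩
    have hfin : (∑' j : ℕ, μ {ω | (fun ω' => Y 0 ω' / (m / 4)) ω ∈ Set.Ioi (j : ℝ)}) < ⊤ :=
      tsum_prob_mem_Ioi_lt_top (helog.div_const (m / 4))
        (fun ω => div_nonneg (le_max_right _ _) hm4.le)
    have heq : ∀ n : ℕ, μ {ω' | Y n ω' ∈ Set.Ioi (m / 4 * n)}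
        = μ {ω | Y 0 ω / (m / 4) ∈ Set.Ioi (n : ℝ)} := by
      intro n
      have h1 : μ {ω' | Y n ω' ∈ Set.Ioi (m / 4 * n)}
          = μ {ω' | Y 0 ω' ∈ Set.Ioi (m / 4 * n)} :=
        (hYident n).measure_mem_eq measurableSet_Ioi
      rw [h1]
      congr 1
      ext ω
      simp only [Set.mem_setOf_eq, Set.mem_Ioi]
      rw [lt_div_iff₀ hm4, mul_comm]
    rw [ne_eq]
    intro h
    rw [tsum_congr heq] at h
    exact hfin.ne h
  filter_upwards [hslln, hBC] with ω hω1 hω2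
  -- extract eventual bounds
  obtain ⟨N₁, hN₁⟩ := (hω1.eventually (eventually_ge_nhds (by linarith : 3 * m / 4 < m))).exists_forall_of_atTop
  obtain ⟨N₂, hN₂⟩ := hω2.exists_forall_of_atTop
  set N : ℕ := N₁ + N₂ with hN
  set f : ℕ → ℝ := fun i => Real.exp (-(∑ j ∈ Finset.Icc 1 (i + 1), ξ j ω)) * |e (i + 1) ω|
  have hgsum : Summable (fun i : ℕ =>
      Real.exp (ξ 0 ω - 5 * m / 4) * Real.exp (-(m / 2)) ^ i) := by
    refine (summable_geometric_of_lt_one (Real.exp_nonneg _) ?_).mul_left _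
    rw [Real.exp_lt_one_iff]
    linarith
  have hkey : ∀ i : ℕ, N ≤ i → f i ≤ Real.exp (ξ 0 ω - 5 * m / 4) * Real.exp (-(m / 2)) ^ i := by
    intro i hi
    have hi1 : N₂ ≤ i + 1 := by omega
    have hi2 : N₁ ≤ i + 2 := by omega
    -- bound on the partial sum
    have hS : 3 * m / 4 * (i + 2) ≤ ∑ j ∈ Finset.range (i + 2), ξ j ω := by
      have h0 := hN₁ (i + 2) hi2
      have hpos : (0:ℝ) < ((i + 2 : ℕ) : ℝ) := by positivity
      have := (le_div_iff₀ hpos).1 h0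
      calc 3 * m / 4 * (i + 2) = 3 * m / 4 * ((i + 2 : ℕ) : ℝ) := by push_cast; ring
        _ ≤ _ := this
    have hIcc : ∑ j ∈ Finset.Icc 1 (i + 1), ξ j ω
        = (∑ j ∈ Finset.range (i + 2), ξ j ω) - ξ 0 ω := by
      rw [sum_Icc_one_eq (fun j => ξ j ω) (i + 1), Finset.sum_range_succ' (fun j => ξ j ω)]
      ring
    -- bound on |e (i+1)|
    have hE : |e (i + 1) ω| ≤ Real.exp (m / 4 * (i + 1)) := by
      have h1 : Y (i + 1) ω ≤ m / 4 * (i + 1) := by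
        have h0 := hN₂ (i + 1) hi1
        simp only [Set.mem_setOf_eq, Set.mem_Ioi, not_lt] at h0
        calc Y (i + 1) ω ≤ m / 4 * ((i + 1 : ℕ) : ℝ) := h0
          _ = m / 4 * (i + 1) := by push_cast; ring
      calc |e (i + 1) ω| ≤ Real.exp (Real.log |e (i + 1) ω|) := Real.le_exp_log _
        _ ≤ Real.exp (Y (i + 1) ω) := Real.exp_le_exp.2 (le_max_left _ _)
        _ ≤ Real.exp (m / 4 * (i + 1)) := Real.exp_le_exp.2 h1
    calc f i ≤ Real.exp (ξ 0 ω - 3 * m / 4 * (i + 2)) * Real.exp (m / 4 * (i + 1)) := by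
          apply mul_le_mul _ hE (abs_nonneg _) (Real.exp_nonneg _)
          rw [Real.exp_le_exp, hIcc]
          linarith
      _ = Real.exp (ξ 0 ω - 5 * m / 4) * Real.exp (-(m / 2)) ^ i := by
          rw [← Real.exp_nat_mul, ← Real.exp_add, ← Real.exp_add]
          congr 1
          ring
  -- conclude by comparison on the tail
  have hgsum' : Summable (fun i : ℕ =>
      Real.exp (ξ 0 ω - 5 * m / 4) * Real.exp (-(m / 2)) ^ (i + N)) :=
    (summable_nat_add_iff N).2 hgsum
  have hfs : Summable (fun i : ℕ => f (i + N)) := by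
    refine hgsum'.of_nonneg_of_le (fun i => ?_) (fun i => hkey (i + N) (by omega))
    exact mul_nonneg (Real.exp_nonneg _) (abs_nonneg _)
  exact (summable_nat_add_iff N).1 hfs
end

section
/- Let (W_i) be independent real random variables such that Σ_{i=1}^∞ P(W_i ≠ a_i) = ∞ for every real sequence (a_i), and suppose Σ W_i converges a.s. to a random variable Y. Then P(Y = c) = 0 for every constant c. -/
open MeasureTheory ProbabilityTheory Filter Topology ENNReal NNReal

lemma meas_singleton_meas (ν : Measure ℝ) [IsFiniteMeasure ν] :
    Measurable fun x : ℝ => ν {x} := by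
  have h1 : Monotone fun x : ℝ => ν (Set.Iic x) := fun a b hab => measure_mono (Set.Iic_subset_Iic.2 hab)
  have h2 : Monotone fun x : ℝ => ν (Set.Iio x) := fun a b hab => measure_mono (Set.Iio_subset_Iio hab)
  have key : (fun x : ℝ => ν {x}) = fun x => ν (Set.Iic x) - ν (Set.Iio x) := by
    funext x
    have : Set.Iic x \ Set.Iio x = {x} := by
      ext y; simp [Set.mem_diff, le_antisymm_iff, not_lt, and_comm]
    rw [← this, measure_diff (Set.Iio_subset_Iic_self) measurableSet_Iio.nullMeasurableSet (measure_ne_top _ _)]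
  rw [key]
  exact h1.measurable.sub h2.measurable

lemma conv_master {Ω α : Type*} [MeasurableSpace Ω] [mα : MeasurableSpace α]
    (μ : Measure Ω) [IsFiniteMeasure μ] {X : Ω → α} {T : Ω → ℝ}
    (hX : Measurable X) (hT : Measurable T) (hind : IndepFun X T μ)
    {φ : α → ℝ} (hφ : Measurable φ) {s : Set α} (hs : MeasurableSet s) (c : ℝ) :
    μ {ω | φ (X ω) + T ω = c ∧ X ω ∈ s}
      = ∫⁻ x in s, (μ.map T) {c - φ x} ∂(μ.map X) := by
  set E : Set (α × ℝ) := {p | φ p.1 + p.2 = c ∧ p.1 ∈ s} with hE_def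
  have hE : MeasurableSet E := by
    have : E = ((fun p : α × ℝ => φ p.1 + p.2) ⁻¹' {c}) ∩ (Prod.fst ⁻¹' s) := rfl
    rw [this]
    exact (((hφ.comp measurable_fst).add measurable_snd) (measurableSet_singleton c)).inter
      (measurable_fst hs)
  have hpair : Measurable fun ω => (X ω, T ω) := hX.prodMk hT
  have hmap := (indepFun_iff_map_prod_eq_prod_map_map hX.aemeasurable hT.aemeasurable).1 hind
  have step1 : μ {ω | φ (X ω) + T ω = c ∧ X ω ∈ s} = μ.map (fun ω => (X ω, T ω)) E := by
    rw [Measure.map_apply hpair hE]; rfl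
  rw [step1, hmap, Measure.prod_apply hE]
  have hsec : ∀ x : α, (μ.map T) (Prod.mk x ⁻¹' E)
      = s.indicator (fun x => (μ.map T) {c - φ x}) x := by
    intro x
    by_cases hx : x ∈ s
    · have : Prod.mk x ⁻¹' E = {c - φ x} := by
        ext t; simp only [hE_def, Set.mem_preimage, Set.mem_setOf_eq, Set.mem_singleton_iff, hx,
          and_true]
        constructor <;> intro h <;> linarith
      rw [this, Set.indicator_of_mem hx]
    · have : Prod.mk x ⁻¹' E = ∅ := by
        ext t; simp [hE_def, hx]
      rw [this, Set.indicator_of_notMem hx]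
      simp
  rw [lintegral_congr hsec, lintegral_indicator hs]

theorem stmt_11 {Ω : Type*} [MeasurableSpace Ω] (μ : Measure Ω) [IsProbabilityMeasure μ]
    (W : ℕ → Ω → ℝ) (Y : Ω → ℝ)
    (hWmeas : ∀ i, Measurable (W i))
    (hWindep : iIndepFun W μ)
    (hdiv : ∀ a : ℕ → ℝ, ∑' i : ℕ, μ {ω | W i ω ≠ a i} = ⊤)
    (hconv : ∀ᵐ ω ∂μ,
      Tendsto (fun n => ∑ i ∈ Finset.range n, W i ω) atTop (nhds (Y ω))) :
    ∀ c : ℝ, μ {ω | Y ω = c} = 0 := by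
  intro c
  by_contra hμc
  -- basic objects
  set mW : ℕ → MeasurableSpace Ω := fun i => MeasurableSpace.comap (W i) Real.measurableSpace
    with hmW_def
  have h_le : ∀ i, mW i ≤ ‹MeasurableSpace Ω› := fun i => (hWmeas i).comap_le
  set S : ℕ → Ω → ℝ := fun n ω => ∑ i ∈ Finset.range n, W i ω with hS_def
  set T : ℕ → Ω → ℝ := fun n ω => liminf (fun m => ∑ i ∈ Finset.Ico n m, W i ω) atTop
    with hT_def
  have hWm : ∀ i, Measurable[mW i] (W i) := fun i => measurable_iff_comap_le.2 le_rfl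
  set ℱ : Filtration ℕ ‹MeasurableSpace Ω› :=
    { seq := fun n => ⨆ i ∈ {i : ℕ | i < n}, mW i,
      mono' := fun n m hnm => biSup_mono fun i hi => lt_of_lt_of_le hi hnm,
      le' := fun n => iSup₂_le fun i _ => h_le i } with hℱ_def
  set tail : ℕ → MeasurableSpace Ω := fun n => ⨆ i ∈ {i : ℕ | i < n}ᶜ, mW i with htail_def
  have htail_le : ∀ n, tail n ≤ ‹MeasurableSpace Ω› := fun n => iSup₂_le fun i _ => h_le i
  -- measurability
  have hS : ∀ n, Measurable[ℱ n] (S n) := by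
    intro n
    apply Finset.measurable_sum
    intro i hi
    exact (hWm i).mono (le_biSup mW (by simpa using Finset.mem_range.1 hi)) le_rfl
  have hSm0 : ∀ n, Measurable (S n) := fun n => (hS n).mono (ℱ.le n) le_rfl
  have hT : ∀ n, Measurable[tail n] (T n) := by
    intro n
    apply Measurable.liminf
    intro m
    apply Finset.measurable_sum
    intro i hi
    refine (hWm i).mono (le_biSup mW ?_) le_rfl
    simp only [Set.mem_compl_iff, Set.mem_setOf_eq, not_lt]
    exact (Finset.mem_Ico.1 hi).1
  have hTm0 : ∀ n, Measurable (T n) := fun n => (hT n).mono (htail_le n) le_rfl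
  set Z : Ω → ℝ := T 0 with hZ_def
  have hZsup : Measurable[⨆ n, ℱ n] Z := by
    refine (hT 0).mono ?_ le_rfl
    refine iSup₂_le fun i _ => ?_
    refine le_trans ?_ (le_iSup _ (i + 1))
    exact le_biSup mW (by simp)
  have hZ : Measurable Z := hTm0 0
  -- independence
  have hIndep : ∀ n, Indep (ℱ n) (tail n) μ := fun n =>
    indep_biSup_compl h_le hWindep {i : ℕ | i < n}
  -- a.e. identities
  have hTY : ∀ᵐ ω ∂μ, ∀ n, T n ω = Y ω - S n ω := by
    filter_upwards [hconv] with ω hω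
    intro n
    have hcong : ∀ᶠ m in atTop, S m ω - S n ω = ∑ i ∈ Finset.Ico n m, W i ω := by
      filter_upwards [eventually_ge_atTop n] with m hm
      rw [Finset.sum_Ico_eq_sub _ hm]
    have htt : Tendsto (fun m => ∑ i ∈ Finset.Ico n m, W i ω) atTop (𝓝 (Y ω - S n ω)) :=
      Tendsto.congr' hcong (hω.sub tendsto_const_nhds)
    exact htt.liminf_eq
  have hZY : ∀ᵐ ω ∂μ, Z ω = Y ω := by
    filter_upwards [hTY] with ω hω
    have := hω 0
    simpa [hS_def] using this
  have hTrec : ∀ n, T n =ᵐ[μ] fun ω => W n ω + T (n + 1) ω := by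
    intro n
    filter_upwards [hTY] with ω hω
    rw [hω n, hω (n + 1)]
    simp only [hS_def]
    rw [Finset.sum_range_succ]
    ring
  -- positive measure atom for Z
  set A : Set Ω := {ω | Z ω = c} with hA_def
  have hAmeas : MeasurableSet[⨆ n, ℱ n] A := hZsup (measurableSet_singleton c)
  have hAmeas0 : MeasurableSet A := hZ (measurableSet_singleton c)
  have hμA : μ A ≠ 0 := by
    intro h0
    apply hμc
    refine le_antisymm ?_ (zero_le)
    have hsub : {ω | Y ω = c} ⊆ A ∪ {ω | ¬ Z ω = Y ω} := by
      intro ω hω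
      by_cases h : Z ω = Y ω
      · left; simp only [hA_def, Set.mem_setOf_eq]; rw [h]; exact hω
      · right; exact h
    have h1 : μ {ω | ¬ Z ω = Y ω} = 0 := by
      rw [← ae_iff] at *; exact hZY
    calc μ {ω | Y ω = c} ≤ μ (A ∪ {ω | ¬ Z ω = Y ω}) := measure_mono hsub
      _ ≤ μ A + μ {ω | ¬ Z ω = Y ω} := measure_union_le _ _
      _ ≤ 0 := by rw [h0, h1, add_zero]
  -- conditional expectation computation
  set f : Ω → ℝ := A.indicator (fun _ => (1 : ℝ)) with hf_def
  have hf_int : Integrable f μ := (integrable_const (1 : ℝ)).indicator hAmeas0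
  have hf_sm : StronglyMeasurable[⨆ n, ℱ n] f :=
    stronglyMeasurable_const.indicator hAmeas
  set h : ℕ → Ω → ℝ := fun n ω => ((μ.map (T n)) {c - S n ω}).toReal with hh_def
  have hprobT : ∀ n, IsProbabilityMeasure (μ.map (T n)) := fun n =>
    Measure.isProbabilityMeasure_map (hTm0 n).aemeasurable
  have hhFmeas : ∀ n, Measurable[ℱ n] (h n) := by
    intro n
    haveI := hprobT n
    exact ((meas_singleton_meas (μ.map (T n))).comp
      (measurable_const.sub (hS n))).ennreal_toReal
  have hcond : ∀ n, h n =ᵐ[μ] μ[f | ℱ n] := by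
    intro n
    haveI := hprobT n
    have hm : (ℱ n : MeasurableSpace Ω) ≤ ‹MeasurableSpace Ω› := ℱ.le n
    have hhm0 : Measurable (h n) := (hhFmeas n).mono hm le_rfl
    have hbound : ∀ ω, ‖h n ω‖ ≤ 1 := by
      intro ω
      rw [Real.norm_eq_abs, abs_of_nonneg ENNReal.toReal_nonneg]
      exact (ENNReal.toReal_mono one_ne_top prob_le_one).trans_eq ENNReal.toReal_one
    have hint : Integrable (h n) μ :=
      (integrable_const (1 : ℝ)).mono' hhm0.aestronglyMeasurable (ae_of_all _ hbound)
    have hIndF : @IndepFun Ω Ω ℝ _ (ℱ n) Real.measurableSpace id (T n) μ := by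
      have h1 : Indep (MeasurableSpace.comap id (ℱ n))
          (MeasurableSpace.comap (T n) Real.measurableSpace) μ := by
        rw [MeasurableSpace.comap_id]
        exact indep_of_indep_of_le_right (hIndep n) (measurable_iff_comap_le.1 (hT n))
      exact h1
    have hfmeasF : Measurable[ℱ n] fun x => (μ.map (T n)) {c - S n x} :=
      (meas_singleton_meas (μ.map (T n))).comp (measurable_const.sub (hS n))
    have hmaster : ∀ s : Set Ω, MeasurableSet[ℱ n] s →
        μ {ω | S n ω + T n ω = c ∧ ω ∈ s} = ∫⁻ x in s, (μ.map (T n)) {c - S n x} ∂μ := by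
      intro s hs
      have hc := @conv_master Ω Ω _ (ℱ n) μ _ id (T n) (measurable_id'' hm) (hTm0 n) hIndF
        (S n) (hS n) s hs c
      simp only [id_eq] at hc
      rw [hc]
      have hmap := @setLIntegral_map Ω Ω _ (ℱ n) μ
        (fun x => (μ.map (T n)) {c - S n x}) id s hs hfmeasF (measurable_id'' hm)
      simpa using hmap
    refine ae_eq_condExp_of_forall_setIntegral_eq hm hf_int
      (fun s _ _ => hint.integrableOn) (fun s hs _ => ?_)
      ((hhFmeas n).stronglyMeasurable.aestronglyMeasurable)
    have hs0 : MeasurableSet s := hm s hs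
    have hRHS : ∫ x in s, f x ∂μ = (μ (A ∩ s)).toReal := by
      rw [hf_def, setIntegral_indicator hAmeas0, setIntegral_const, smul_eq_mul, mul_one,
        Set.inter_comm, measureReal_def]
    have hLHS : ∫ x in s, h n x ∂μ
        = (∫⁻ x in s, (μ.map (T n)) {c - S n x} ∂μ).toReal := by
      refine integral_toReal ((hfmeasF.mono hm le_rfl).aemeasurable.restrict) ?_
      exact ae_of_all _ fun x => measure_lt_top _ _
    rw [hLHS, hRHS, ← hmaster s hs]
    congr 1
    apply measure_congr
    rw [Filter.eventuallyEq_set]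
    filter_upwards [hTY, hZY] with ω h1 h2
    simp only [Set.mem_setOf_eq, Set.mem_inter_iff, hA_def]
    rw [h1 n, ← h2]
    constructor
    · rintro ⟨he, hsx⟩
      exact ⟨by linarith, hsx⟩
    · rintro ⟨he, hsx⟩
      exact ⟨by linarith, hsx⟩
  -- Lévy upward theorem
  have hLevy : ∀ᵐ ω ∂μ, Tendsto (fun n => (μ[f | ℱ n]) ω) atTop (𝓝 (f ω)) :=
    hf_int.tendsto_ae_condExp hf_sm
  have hae_all : ∀ᵐ ω ∂μ, ∀ n, h n ω = (μ[f | ℱ n]) ω := ae_all_iff.2 fun n => hcond n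
  -- pick a good point ω₀ in A
  set P : Set Ω := {ω | Tendsto (fun n => (μ[f | ℱ n]) ω) atTop (𝓝 (f ω)) ∧
    ∀ n, h n ω = (μ[f | ℱ n]) ω} with hP_def
  have hPc : μ Pᶜ = 0 := by
    have h2 := ae_iff.1 (hLevy.and hae_all)
    simpa [hP_def, Set.compl_setOf] using h2
  have hAP : (A ∩ P).Nonempty := by
    rcases Set.eq_empty_or_nonempty (A ∩ P) with he | hne
    · exfalso
      apply hμA
      refine le_antisymm ?_ (zero_le)
      calc μ A ≤ μ ((A ∩ P) ∪ Pᶜ) := measure_mono (by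
              intro ω hω
              by_cases hp : ω ∈ P
              · exact Or.inl ⟨hω, hp⟩
              · exact Or.inr hp)
        _ ≤ μ (A ∩ P) + μ Pᶜ := measure_union_le _ _
        _ ≤ 0 := by rw [he, measure_empty, hPc, add_zero]
    · exact hne
  obtain ⟨ω₀, hω₀A, hω₀T, hω₀E⟩ : ∃ ω₀, ω₀ ∈ A ∧
      Tendsto (fun n => (μ[f | ℱ n]) ω₀) atTop (𝓝 (f ω₀)) ∧
      ∀ n, h n ω₀ = (μ[f | ℱ n]) ω₀ := by
    obtain ⟨ω₀, hωA, hωP⟩ := hAP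
    exact ⟨ω₀, hωA, hωP.1, hωP.2⟩
  have hfω₀ : f ω₀ = 1 := Set.indicator_of_mem hω₀A _
  have hq : Tendsto (fun n => h n ω₀) atTop (𝓝 1) := by
    rw [← hfω₀]
    exact hω₀T.congr (fun n => (hω₀E n).symm)
  -- the sequence of near-atoms
  set a : ℕ → ℝ := fun n => W n ω₀ with ha_def
  set b : ℕ → ℝ := fun n => c - S n ω₀ with hb_def
  set p : ℕ → ℝ≥0∞ := fun n => (μ.map (T n)) {b n} with hp_def
  have hh₀ : ∀ n, h n ω₀ = (p n).toReal := fun n => rfl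
  obtain ⟨N, hN⟩ : ∃ N, ∀ n ≥ N, (7 : ℝ)/8 < (p n).toReal := by
    have := hq.eventually (eventually_gt_nhds (by norm_num : (7 : ℝ)/8 < 1))
    simp only [hh₀] at this
    exact eventually_atTop.1 this
  have hIndWT : ∀ n, IndepFun (W n) (T (n + 1)) μ := by
    intro n
    have h1 : Indep (mW n) (tail (n + 1)) μ :=
      indep_of_indep_of_le_left (hIndep (n + 1)) (le_biSup mW (by simp))
    exact indep_of_indep_of_le_right h1 (measurable_iff_comap_le.1 (hT (n + 1)))
  haveI hprobW : ∀ n, IsProbabilityMeasure (μ.map (W n)) := fun n =>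
    Measure.isProbabilityMeasure_map (hWmeas n).aemeasurable
  have hb_succ : ∀ n, b n - a n = b (n + 1) := by
    intro n
    simp only [hb_def, ha_def, hS_def]
    rw [Finset.sum_range_succ]
    ring
  have hkey : ∀ n, p n ≤ p (n + 1) * (μ.map (W n)) {a n}
      + (1 - p (n + 1)) * (μ.map (W n)) {a n}ᶜ := by
    intro n
    haveI := hprobT (n + 1)
    have e1 : p n = μ {ω | T n ω = b n} := by
      have h0 : p n = (μ.map (T n)) {b n} := rfl
      rw [h0, Measure.map_apply (hTm0 n) (measurableSet_singleton _)]
      rfl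
    have e2 : μ {ω | T n ω = b n} = μ {ω | W n ω + T (n + 1) ω = b n} := by
      apply measure_congr
      rw [Filter.eventuallyEq_set]
      filter_upwards [hTrec n] with ω hω
      simp only [Set.mem_setOf_eq, hω]
    have e3 : μ {ω | W n ω + T (n + 1) ω = b n}
        = ∫⁻ x, (μ.map (T (n + 1))) {b n - x} ∂(μ.map (W n)) := by
      have hc := conv_master μ (hWmeas n) (hTm0 (n + 1)) (hIndWT n)
        measurable_id MeasurableSet.univ (b n)
      simp only [Set.mem_univ, and_true, id_eq, Measure.restrict_univ] at hc
      exact hc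
    have hsplit : ∫⁻ x, (μ.map (T (n + 1))) {b n - x} ∂(μ.map (W n)) =
        (∫⁻ x in {a n}, (μ.map (T (n + 1))) {b n - x} ∂(μ.map (W n))) +
        ∫⁻ x in {a n}ᶜ, (μ.map (T (n + 1))) {b n - x} ∂(μ.map (W n)) :=
      (lintegral_add_compl _ (measurableSet_singleton (a n))).symm
    have hpart1 : ∫⁻ x in {a n}, (μ.map (T (n + 1))) {b n - x} ∂(μ.map (W n))
        = p (n + 1) * (μ.map (W n)) {a n} := by
      rw [lintegral_singleton, hb_succ n]
    have hpart2 : ∫⁻ x in {a n}ᶜ, (μ.map (T (n + 1))) {b n - x} ∂(μ.map (W n))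
        ≤ (1 - p (n + 1)) * (μ.map (W n)) {a n}ᶜ := by
      have hbd : ∀ x ∈ ({a n}ᶜ : Set ℝ), (μ.map (T (n + 1))) {b n - x} ≤ 1 - p (n + 1) := by
        intro x hx
        have hne : b n - x ≠ b (n + 1) := by
          intro hEq
          apply hx
          rw [Set.mem_singleton_iff]
          have h2 := hb_succ n
          linarith [hEq, h2]
        have hsub : ({b n - x} : Set ℝ) ⊆ {b (n + 1)}ᶜ :=
          Set.singleton_subset_iff.2 hne
        calc (μ.map (T (n + 1))) {b n - x} ≤ (μ.map (T (n + 1))) {b (n + 1)}ᶜ :=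
              measure_mono hsub
          _ = 1 - p (n + 1) := prob_compl_eq_one_sub (measurableSet_singleton _)
      calc ∫⁻ x in {a n}ᶜ, (μ.map (T (n + 1))) {b n - x} ∂(μ.map (W n))
          ≤ ∫⁻ _ in {a n}ᶜ, (1 - p (n + 1)) ∂(μ.map (W n)) :=
            setLIntegral_mono' (measurableSet_singleton (a n)).compl hbd
        _ = (1 - p (n + 1)) * (μ.map (W n)) {a n}ᶜ := setLIntegral_const _ _
    rw [e1, e2, e3, hsplit, hpart1]
    exact add_le_add le_rfl hpart2
  -- real versions
  set rr : ℕ → ℝ≥0∞ := fun n => (μ.map (W n)) {a n}ᶜ with hrr_def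
  set pR : ℕ → ℝ := fun n => (p n).toReal with hpR_def
  set rR : ℕ → ℝ := fun n => (rr n).toReal with hrR_def
  set mR : ℕ → ℝ := fun n => ((μ.map (W n)) {a n}).toReal with hmR_def
  have hsum1 : ∀ n, mR n + rR n = 1 := by
    intro n
    rw [hmR_def, hrR_def, hrr_def,
      ← ENNReal.toReal_add (measure_ne_top _ _) (measure_ne_top _ _),
      measure_add_measure_compl (measurableSet_singleton _), measure_univ, ENNReal.toReal_one]
  have hp_le_one : ∀ n, p n ≤ 1 := by
    intro n
    haveI := hprobT n
    exact prob_le_one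
  have hpR_le_one : ∀ n, pR n ≤ 1 := by
    intro n
    rw [hpR_def]
    exact ENNReal.toReal_mono one_ne_top (hp_le_one n) |>.trans_eq ENNReal.toReal_one
  have hkeyR : ∀ n, pR n ≤ pR (n + 1) * mR n + (1 - pR (n + 1)) * rR n := by
    intro n
    have hfin : p (n + 1) * (μ.map (W n)) {a n} + (1 - p (n + 1)) * rr n ≠ ⊤ := by
      apply ENNReal.add_ne_top.2
      constructor
      · exact ENNReal.mul_ne_top (ne_top_of_le_ne_top one_ne_top (hp_le_one (n+1)))
          (measure_ne_top _ _)
      · exact ENNReal.mul_ne_top (ne_top_of_le_ne_top one_ne_top tsub_le_self) (measure_ne_top _ _)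
    have h1 := ENNReal.toReal_mono hfin (hkey n)
    rw [ENNReal.toReal_add, ENNReal.toReal_mul, ENNReal.toReal_mul,
      ENNReal.toReal_sub_of_le (hp_le_one (n + 1)) one_ne_top, ENNReal.toReal_one] at h1
    · exact h1
    · exact ENNReal.mul_ne_top (ne_top_of_le_ne_top one_ne_top (hp_le_one (n+1)))
        (measure_ne_top _ _)
    · exact ENNReal.mul_ne_top (ne_top_of_le_ne_top one_ne_top tsub_le_self) (measure_ne_top _ _)
  have hstep : ∀ n, N ≤ n → pR n + (3/4) * rR n ≤ pR (n + 1) := by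
    intro n hn
    have h78 : (7 : ℝ)/8 < pR (n + 1) := hN (n + 1) (le_trans hn (Nat.le_succ n))
    have h1 := hkeyR n
    have h2 := hsum1 n
    have h3 : (0 : ℝ) ≤ rR n := ENNReal.toReal_nonneg
    have h4 := hpR_le_one (n + 1)
    nlinarith
  have htel : ∀ m, N ≤ m → pR N + (3/4) * ∑ i ∈ Finset.Ico N m, rR i ≤ pR m := by
    intro m hm
    induction m, hm using Nat.le_induction with
    | base => simp
    | succ m hm ih =>
      rw [Finset.sum_Ico_succ_top hm]
      have := hstep m hm
      linarith
  have hsumR : ∀ m, ∑ i ∈ Finset.Ico N m, rR i ≤ 4/3 := by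
    intro m
    rcases le_or_gt N m with hm | hm
    · have h1 := htel m hm
      have h2 : (0 : ℝ) ≤ pR N := ENNReal.toReal_nonneg
      have h3 := hpR_le_one m
      linarith
    · rw [Finset.Ico_eq_empty (by omega)]
      norm_num
  have hrr_eq : ∀ n, μ {ω | W n ω ≠ a n} = rr n := by
    intro n
    have h0 : rr n = μ (W n ⁻¹' {a n}ᶜ) :=
      Measure.map_apply (hWmeas n) (measurableSet_singleton _).compl
    rw [h0]
    rfl
  have hfin : ∑' i, μ {ω | W i ω ≠ a i} ≤ (N : ℝ≥0∞) + ENNReal.ofReal (4/3) := by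
    rw [ENNReal.tsum_eq_iSup_sum]
    apply iSup_le
    intro t
    obtain ⟨M, hM⟩ := t.exists_nat_subset_range
    have hMN : t ⊆ Finset.range (max M N) := hM.trans (Finset.range_subset_range.2 (le_max_left _ _))
    calc ∑ i ∈ t, μ {ω | W i ω ≠ a i} ≤ ∑ i ∈ Finset.range (max M N), μ {ω | W i ω ≠ a i} :=
          Finset.sum_le_sum_of_subset hMN
      _ = ∑ i ∈ Finset.Ico 0 N, μ {ω | W i ω ≠ a i}
          + ∑ i ∈ Finset.Ico N (max M N), μ {ω | W i ω ≠ a i} := by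
          rw [Finset.sum_Ico_consecutive _ (Nat.zero_le N) (le_max_right M N),
            ← Finset.range_eq_Ico]
      _ ≤ (N : ℝ≥0∞) + ENNReal.ofReal (4/3) := by
          gcongr
          · calc ∑ i ∈ Finset.Ico 0 N, μ {ω | W i ω ≠ a i}
                ≤ ∑ _i ∈ Finset.Ico 0 N, (1 : ℝ≥0∞) :=
                  Finset.sum_le_sum fun i _ => prob_le_one
              _ = (N : ℝ≥0∞) := by simp
          · have : ∑ i ∈ Finset.Ico N (max M N), μ {ω | W i ω ≠ a i}
                = ENNReal.ofReal (∑ i ∈ Finset.Ico N (max M N), rR i) := by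
              rw [ENNReal.ofReal_sum_of_nonneg fun i _ => ENNReal.toReal_nonneg]
              refine Finset.sum_congr rfl fun i _ => ?_
              rw [hrr_eq i]
              exact (ENNReal.ofReal_toReal (measure_ne_top _ _)).symm
            rw [this]
            exact ENNReal.ofReal_le_ofReal (hsumR _)
  rw [hdiv a] at hfin
  exact (ENNReal.add_ne_top.2 ⟨ENNReal.natCast_ne_top N, ENNReal.ofReal_ne_top⟩)
    (top_le_iff.1 hfin)
end

section
/- Under the conditions of the nonstationary RCA model with E log|φ+b_0| ≥ 0 (so that |X_{k}| → ∞ in probability), for all y > 0: (1/n) Σ_{k=1}^n ( (X_{k−1}b_k + e_k)²/(ω²X_{k−1}² + σ²) − 1 ) → 0 in probability. -/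
open MeasureTheory ProbabilityTheory Filter
open scoped NNReal ENNReal

set_option maxHeartbeats 1000000

/-- path-space version of the RCA recursion -/
def XFaux (φ x0 : ℝ) : ℕ → (ℕ → ℝ × ℝ) → ℝ
  | 0, _ => x0
  | (n+1), v => (φ + (v (n+1)).1) * XFaux φ x0 n v + (v (n+1)).2

lemma XFaux_measurable (φ x0 : ℝ) (n : ℕ) : Measurable (XFaux φ x0 n) := by
  induction n with
  | zero => exact measurable_const
  | succ n ih =>
    exact ((measurable_const.add (measurable_fst.comp (measurable_pi_apply (n+1)))).mul ih).add
      (measurable_snd.comp (measurable_pi_apply (n+1)))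

lemma XFaux_congr (φ x0 : ℝ) (n : ℕ) (v w : ℕ → ℝ × ℝ)
    (h : ∀ i, i ≤ n → v i = w i) : XFaux φ x0 n v = XFaux φ x0 n w := by
  induction n with
  | zero => rfl
  | succ n ih =>
    simp only [XFaux, h (n+1) le_rfl, ih (fun i hi => h i (hi.trans (Nat.le_succ n)))]

/-- Markov inequality in the form we need. -/
lemma mylem_markov {Ω : Type*} [MeasurableSpace Ω] (μ : Measure Ω) [IsProbabilityMeasure μ]
    {f : Ω → ℝ} (hf : Integrable f μ) (hnn : ∀ ω, 0 ≤ f ω) {t : ℝ} (ht : 0 < t) :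
    μ {ω | t ≤ f ω} ≤ ENNReal.ofReal ((∫ ω, f ω ∂μ) / t) := by
  have h := mul_meas_ge_le_integral_of_nonneg (ae_of_all μ hnn) hf t
  have hfin : μ {ω | t ≤ f ω} ≠ ⊤ := measure_ne_top μ _
  rw [← ENNReal.ofReal_toReal hfin]
  apply ENNReal.ofReal_le_ofReal
  rw [le_div_iff₀ ht]
  have h' : t * (μ {ω | t ≤ f ω}).toReal ≤ ∫ ω, f ω ∂μ := h
  linarith [h']

/-- second moment of a sum of orthogonal, bounded random variables -/
lemma mylem_sumsq {Ω : Type*} [MeasurableSpace Ω] (μ : Measure Ω) [IsProbabilityMeasure μ]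
    (s : Finset ℕ) (D : ℕ → Ω → ℝ) (B : ℝ) (hB : 0 ≤ B)
    (hmeas : ∀ k ∈ s, Measurable (D k))
    (hbdd : ∀ k ∈ s, ∀ ω, |D k ω| ≤ B)
    (horth : ∀ j ∈ s, ∀ k ∈ s, j ≠ k → ∫ ω, D j ω * D k ω ∂μ = 0) :
    ∫ ω, (∑ k ∈ s, D k ω)^2 ∂μ ≤ s.card * B^2 := by
  have hint : ∀ j ∈ s, ∀ k ∈ s, Integrable (fun ω => D j ω * D k ω) μ := by
    intro j hj k hk
    refine Integrable.mono' (integrable_const (B^2)) ((hmeas j hj).mul (hmeas k hk)).aestronglyMeasurable (ae_of_all _ fun ω => ?_)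
    rw [Real.norm_eq_abs, abs_mul, sq]
    exact mul_le_mul (hbdd j hj ω) (hbdd k hk ω) (abs_nonneg _) hB
  have expand : ∀ ω, (∑ k ∈ s, D k ω)^2 = ∑ j ∈ s, ∑ k ∈ s, D j ω * D k ω := by
    intro ω; rw [sq, Finset.sum_mul_sum]
  calc ∫ ω, (∑ k ∈ s, D k ω)^2 ∂μ
      = ∑ j ∈ s, ∑ k ∈ s, ∫ ω, D j ω * D k ω ∂μ := by
        simp_rw [expand]
        rw [integral_finset_sum _ (fun j hj => integrable_finset_sum _ (fun k hk => hint j hj k hk))]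
        exact Finset.sum_congr rfl fun j hj => integral_finset_sum _ (fun k hk => hint j hj k hk)
    _ = ∑ j ∈ s, ∫ ω, D j ω * D j ω ∂μ := by
        refine Finset.sum_congr rfl fun j hj => ?_
        exact Finset.sum_eq_single_of_mem j hj (fun k hk hne => horth j hj k hk (Ne.symm hne))
    _ ≤ ∑ j ∈ s, B^2 := by
        refine Finset.sum_le_sum fun j hj => ?_
        calc ∫ ω, D j ω * D j ω ∂μ ≤ ∫ _ω, B^2 ∂μ := by
              refine integral_mono (hint j hj j hj) (integrable_const _) fun ω => ?_
              have := hbdd j hj ω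
              nlinarith [abs_nonneg (D j ω), sq_abs (D j ω)]
          _ = B^2 := by simp
    _ = s.card * B^2 := by rw [Finset.sum_const, nsmul_eq_mul]

theorem stmt_18 {Ω : Type*} [MeasurableSpace Ω] (μ : Measure Ω) [IsProbabilityMeasure μ]
    (φ x0 ω2 σ2 : ℝ) (b e : ℕ → Ω → ℝ) (X : ℕ → Ω → ℝ)
    (hbmeas : ∀ i, Measurable (b i)) (hemeas : ∀ i, Measurable (e i))
    (hindep : iIndepFun
      (fun i ω => (b i ω, e i ω)) μ)
    (hident : ∀ i, IdentDistrib (fun ω => (b i ω, e i ω)) (fun ω => (b 0 ω, e 0 ω)) μ μ)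
    (hbint : Integrable (b 0) μ) (hb2int : Integrable (fun ω => (b 0 ω)^2) μ)
    (heint : Integrable (e 0) μ) (he2int : Integrable (fun ω => (e 0 ω)^2) μ)
    (hbeint : Integrable (fun ω => b 0 ω * e 0 ω) μ)
    (hbmean : ∫ ω, b 0 ω ∂μ = 0) (hb2 : ∫ ω, (b 0 ω)^2 ∂μ = ω2) (hω2 : 0 < ω2)
    (hemean : ∫ ω, e 0 ω ∂μ = 0) (he2 : ∫ ω, (e 0 ω)^2 ∂μ = σ2) (hσ2 : 0 < σ2)
    (hcov : ∫ ω, b 0 ω * e 0 ω ∂μ = 0)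
    (hlogint : Integrable (fun ω => Real.log |φ + b 0 ω|) μ)
    (hlog : 0 ≤ ∫ ω, Real.log |φ + b 0 ω| ∂μ)
    (hX0 : ∀ ω, X 0 ω = x0)
    (hrec : ∀ k : ℕ, 1 ≤ k → ∀ ω, X k ω = (φ + b k ω) * X (k - 1) ω + e k ω)
    (hXindep : ∀ k : ℕ, 1 ≤ k →
      IndepFun (fun ω => (b k ω, e k ω)) (X (k - 1)) μ) :
    ∀ δ : ℝ, 0 < δ →
      Tendsto (fun n : ℕ =>
        μ {ω | δ ≤ |(1 / (n : ℝ)) * ∑ k ∈ Finset.Icc 1 n,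
          ((X (k - 1) ω * b k ω + e k ω)^2 / (ω2 * (X (k - 1) ω)^2 + σ2) - 1)|})
        atTop (nhds 0) := by
  obtain ⟨P, hP⟩ : ∃ P : ℕ → Ω → ℝ × ℝ, P = fun i ω => (b i ω, e i ω) := ⟨_, rfl⟩
  have hPmeas : ∀ i, Measurable (P i) := fun i => hP ▸ (hbmeas i).prodMk (hemeas i)
  obtain ⟨Z, hZ⟩ : ∃ Z : ℝ × ℝ → ℝ, Z = fun p => 1 + 2*p.1^2/ω2 + 2*p.2^2/σ2 := ⟨_, rfl⟩
  have hZmeas : Measurable Z := by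
    rw [hZ]
    apply Measurable.add
    apply Measurable.add measurable_const
    · exact ((measurable_fst.pow measurable_const).const_mul 2).div_const ω2
    · exact ((measurable_snd.pow measurable_const).const_mul 2).div_const σ2
  have hZ1 : ∀ p, 1 ≤ Z p := by
    intro p
    have h1 : 0 ≤ 2*p.1^2/ω2 := by positivity
    have h2 : 0 ≤ 2*p.2^2/σ2 := by positivity
    rw [hZ]; dsimp only; linarith
  have hZP0eq : (fun ω => Z (P 0 ω)) = fun ω => 1 + (2/ω2)*(b 0 ω)^2 + (2/σ2)*(e 0 ω)^2 := by
    funext ω; rw [hZ, hP]; dsimp only; ring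
  have iZ1 : Integrable (fun ω => 1 + (2/ω2)*(b 0 ω)^2) μ := by
    exact (integrable_const 1).add (hb2int.const_mul _)
  have iZ2 : Integrable (fun ω => (2/σ2)*(e 0 ω)^2) μ := by exact he2int.const_mul _
  have hZint : Integrable (fun ω => Z (P 0 ω)) μ := by rw [hZP0eq]; exact iZ1.add iZ2
  have hZ5 : ∫ ω, Z (P 0 ω) ∂μ = 5 := by
    rw [hZP0eq, integral_add iZ1 iZ2, integral_add (integrable_const 1) (hb2int.const_mul _),
      integral_const_mul, integral_const_mul, hb2, he2]
    simp only [integral_const, measure_univ, probReal_univ, ENNReal.toReal_one, smul_eq_mul, one_mul]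
    field_simp
    ring
  have hden : ∀ x : ℝ, 0 < ω2*x^2 + σ2 := by
    intro x; have := sq_nonneg x; nlinarith
  obtain ⟨f, hf⟩ : ∃ f : ℝ → ℝ × ℝ → ℝ,
      f = fun x p => (x*p.1 + p.2)^2/(ω2*x^2 + σ2) - 1 := ⟨_, rfl⟩
  have hfmeas : Measurable (fun q : ℝ × (ℝ × ℝ) => f q.1 q.2) := by
    rw [hf]
    have hc : Continuous (fun q : ℝ × (ℝ × ℝ) =>
        (q.1*q.2.1 + q.2.2)^2/(ω2*q.1^2 + σ2) - 1) := by
      apply Continuous.sub _ continuous_const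
      exact Continuous.div (by fun_prop) (by fun_prop) fun q => (hden q.1).ne'
    exact hc.measurable
  have hfZ : ∀ x p, |f x p| ≤ Z p := by
    intro x ⟨u, v⟩
    have hd := hden x
    have hA : (0:ℝ) ≤ (x*u + v)^2 := sq_nonneg _
    have hzd : Z (u, v) * (ω2*x^2 + σ2)
        = (ω2*x^2 + σ2) + 2*u^2*x^2 + 2*u^2*σ2/ω2 + 2*v^2*ω2*x^2/σ2 + 2*v^2 := by
      rw [hZ]; dsimp only; field_simp; ring
    have hextra1 : 0 ≤ 2*u^2*σ2/ω2 := by positivity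
    have hextra2 : 0 ≤ 2*v^2*ω2*x^2/σ2 := by positivity
    have h2 : (x*u + v)^2 ≤ Z (u,v) * (ω2*x^2 + σ2) := by nlinarith [sq_nonneg (x*u - v)]
    have hupper : (x*u + v)^2/(ω2*x^2 + σ2) ≤ Z (u,v) := by
      rw [div_le_iff₀ hd]; exact h2
    have hlow : 0 ≤ (x*u + v)^2/(ω2*x^2 + σ2) := by positivity
    have hfval : f x (u, v) = (x*u + v)^2/(ω2*x^2 + σ2) - 1 := by rw [hf]
    rw [abs_le, hfval]
    have := hZ1 (u, v)
    constructor <;> linarith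
  have hsq_split : ∀ x : ℝ, (fun ω => (x * b 0 ω + e 0 ω)^2)
      = fun ω => x^2*(b 0 ω)^2 + ((2*x)*(b 0 ω * e 0 ω) + (e 0 ω)^2) := by
    intro x; funext ω; ring
  have i1 : ∀ x : ℝ, Integrable (fun ω => x^2*(b 0 ω)^2) μ := fun x => by
    exact hb2int.const_mul _
  have i2 : ∀ x : ℝ, Integrable (fun ω => (2*x)*(b 0 ω * e 0 ω)) μ := fun x => by
    exact hbeint.const_mul _
  have i3 : ∀ x : ℝ, Integrable (fun ω => (2*x)*(b 0 ω * e 0 ω) + (e 0 ω)^2) μ := fun x => by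
    exact (i2 x).add he2int
  have hsq_int : ∀ x : ℝ, Integrable (fun ω => (x * b 0 ω + e 0 ω)^2) μ := by
    intro x; rw [hsq_split x]; exact (i1 x).add (i3 x)
  have hsq_mean : ∀ x : ℝ, ∫ ω, (x * b 0 ω + e 0 ω)^2 ∂μ = ω2*x^2 + σ2 := by
    intro x
    rw [hsq_split x, integral_add (i1 x) (i3 x), integral_add (i2 x) he2int,
      integral_const_mul, integral_const_mul, hb2, he2, hcov]
    ring
  have hfint0 : ∀ x : ℝ, Integrable (fun ω => f x (P 0 ω)) μ := by
    intro x
    refine Integrable.mono' hZint ?_ (ae_of_all _ fun ω => ?_)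
    · exact (hfmeas.comp (measurable_const.prodMk (hPmeas 0))).aestronglyMeasurable
    · rw [Real.norm_eq_abs]; exact hfZ x (P 0 ω)
  have hfmean : ∀ x : ℝ, ∫ ω, f x (P 0 ω) ∂μ = 0 := by
    intro x
    have heq : (fun ω => f x (P 0 ω))
        = fun ω => (x * b 0 ω + e 0 ω)^2/(ω2*x^2 + σ2) - 1 := by
      funext ω; rw [hf, hP]
    rw [heq, integral_sub ((hsq_int x).div_const _) (integrable_const 1), integral_div,
      hsq_mean x]
    simp only [integral_const, measure_univ, probReal_univ, ENNReal.toReal_one, smul_eq_mul, one_mul]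
    field_simp
    ring

  -- truncation machinery
  obtain ⟨ftr, hftr⟩ : ∃ F : ℕ → ℝ → ℝ × ℝ → ℝ,
      F = fun (c : ℕ) x p => if Z p ≤ (c:ℝ) then f x p else 0 := ⟨_, rfl⟩
  obtain ⟨zc, hzc⟩ : ∃ F : ℕ → ℝ × ℝ → ℝ,
      F = fun (c : ℕ) p => if (c:ℝ) < Z p then Z p else 0 := ⟨_, rfl⟩
  have hftr_meas : ∀ c, Measurable (fun q : ℝ × (ℝ × ℝ) => ftr c q.1 q.2) := by
    intro c; rw [hftr]
    exact Measurable.ite (measurableSet_le (hZmeas.comp measurable_snd) measurable_const)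
      hfmeas measurable_const
  have hzc_meas : ∀ c, Measurable (zc c) := by
    intro c; rw [hzc]
    exact Measurable.ite (measurableSet_lt measurable_const hZmeas) hZmeas measurable_const
  have hZpos : ∀ p, 0 ≤ Z p := fun p => le_trans zero_le_one (hZ1 p)
  have hftr_bound : ∀ c x p, |ftr c x p| ≤ Z p := by
    intro c x p; rw [hftr]; dsimp only
    split
    · exact hfZ x p
    · simpa using hZpos p
  have hftr_le_c : ∀ c x p, |ftr c x p| ≤ (c:ℝ) := by
    intro c x p; rw [hftr]; dsimp only
    split
    · exact le_trans (hfZ x p) (by assumption)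
    · simpa using Nat.cast_nonneg c
  have hzc_nonneg : ∀ c p, 0 ≤ zc c p := by
    intro c p; rw [hzc]; dsimp only; split
    · exact hZpos p
    · exact le_refl 0
  have hzc_le_Z : ∀ c p, zc c p ≤ Z p := by
    intro c p; rw [hzc]; dsimp only; split
    · exact le_refl _
    · exact hZpos p
  have hzcint : ∀ c, Integrable (fun ω => zc c (P 0 ω)) μ := by
    intro c
    refine Integrable.mono' hZint ((hzc_meas c).comp (hPmeas 0)).aestronglyMeasurable
      (ae_of_all _ fun ω => ?_)
    rw [Real.norm_eq_abs, abs_of_nonneg (hzc_nonneg c _)]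
    exact hzc_le_Z c _
  obtain ⟨eps, heps⟩ : ∃ F : ℕ → ℝ, F = fun (c : ℕ) => ∫ ω, zc c (P 0 ω) ∂μ := ⟨_, rfl⟩
  have heps_nonneg : ∀ c, 0 ≤ eps c := by
    intro c; rw [heps]
    exact integral_nonneg fun ω => hzc_nonneg c _
  have heps5 : ∀ c, eps c ≤ 5 := by
    intro c; rw [heps, ← hZ5]
    exact integral_mono (hzcint c) hZint fun ω => hzc_le_Z c _
  have hepslim : Tendsto eps atTop (nhds 0) := by
    rw [heps]
    have h0 : (0:ℝ) = ∫ (_ : Ω), (0:ℝ) ∂μ := by simp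
    rw [h0]
    refine tendsto_integral_of_dominated_convergence (fun ω => Z (P 0 ω))
      (fun c => ((hzc_meas c).comp (hPmeas 0)).aestronglyMeasurable) hZint
      (fun c => ae_of_all _ fun ω => ?_) (ae_of_all _ fun ω => ?_)
    · rw [Real.norm_eq_abs, abs_of_nonneg (hzc_nonneg c _)]
      exact hzc_le_Z c _
    · refine tendsto_const_nhds.congr' ?_
      rw [Filter.EventuallyEq, eventually_atTop]
      refine ⟨Nat.ceil (Z (P 0 ω)), fun c hc => ?_⟩
      rw [hzc]; dsimp only
      rw [if_neg]
      push_neg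
      exact le_trans (Nat.le_ceil _) (Nat.cast_le.2 hc)
  have hftr_int : ∀ c x, Integrable (fun ω => ftr c x (P 0 ω)) μ := by
    intro c x
    refine Integrable.mono' hZint
      (((hftr_meas c).comp (measurable_const.prodMk (hPmeas 0)))).aestronglyMeasurable
      (ae_of_all _ fun ω => ?_)
    rw [Real.norm_eq_abs]; exact hftr_bound c x _
  obtain ⟨g, hg⟩ : ∃ F : ℕ → ℝ → ℝ, F = fun (c : ℕ) x => ∫ ω, ftr c x (P 0 ω) ∂μ := ⟨_, rfl⟩
  have hgmeas : ∀ c, Measurable (g c) := by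
    intro c; rw [hg]
    have : Measurable (Function.uncurry fun x ω => ftr c x (P 0 ω)) := by
      have : (Function.uncurry fun (x:ℝ) (ω:Ω) => ftr c x (P 0 ω))
          = (fun q : ℝ × (ℝ × ℝ) => ftr c q.1 q.2) ∘ (fun q : ℝ × Ω => (q.1, P 0 q.2)) := rfl
      rw [this]
      exact (hftr_meas c).comp (measurable_fst.prodMk ((hPmeas 0).comp measurable_snd))
    exact (StronglyMeasurable.integral_prod_right' (f := fun q : ℝ × Ω => ftr c q.1 (P 0 q.2))
      this.stronglyMeasurable).measurable
  have hrtr_int : ∀ c x, Integrable (fun ω => if (c:ℝ) < Z (P 0 ω) then f x (P 0 ω) else 0) μ := by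
    intro c x
    refine Integrable.mono' hZint ?_ (ae_of_all _ fun ω => ?_)
    · refine Measurable.aestronglyMeasurable ?_
      refine Measurable.ite (measurableSet_lt measurable_const (hZmeas.comp (hPmeas 0))) ?_
        measurable_const
      exact hfmeas.comp (measurable_const.prodMk (hPmeas 0))
    · rw [Real.norm_eq_abs]
      split
      · exact hfZ x _
      · simpa using hZpos _
  have hg_bound : ∀ c x, |g c x| ≤ eps c := by
    intro c x
    have hsplit : ∀ ω, ftr c x (P 0 ω)
        = f x (P 0 ω) - (if (c:ℝ) < Z (P 0 ω) then f x (P 0 ω) else 0) := by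
      intro ω
      rw [hftr]; dsimp only
      rcases le_or_gt (Z (P 0 ω)) (c:ℝ) with h | h
      · rw [if_pos h, if_neg (not_lt.2 h), sub_zero]
      · rw [if_neg (not_le.2 h), if_pos h, sub_self]
    have : g c x = - ∫ ω, (if (c:ℝ) < Z (P 0 ω) then f x (P 0 ω) else 0) ∂μ := by
      rw [hg]; dsimp only
      rw [integral_congr_ae (ae_of_all _ hsplit), integral_sub (hfint0 x) (hrtr_int c x),
        hfmean x, zero_sub]
    rw [this, abs_neg]
    calc |∫ ω, (if (c:ℝ) < Z (P 0 ω) then f x (P 0 ω) else 0) ∂μ|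
        ≤ ∫ ω, |if (c:ℝ) < Z (P 0 ω) then f x (P 0 ω) else 0| ∂μ := by
          rw [← Real.norm_eq_abs]
          exact (norm_integral_le_integral_norm _).trans (le_of_eq (by simp [Real.norm_eq_abs]))
      _ ≤ eps c := by
          rw [heps]
          refine integral_mono (hrtr_int c x).abs (hzcint c) fun ω => ?_
          rw [hzc]; dsimp only
          rcases lt_or_ge ((c:ℝ)) (Z (P 0 ω)) with h | h
          · rw [if_pos h, if_pos h]; exact hfZ x _
          · rw [if_neg (not_lt.2 h), if_neg (not_lt.2 h)]; simp

  -- representation of X on path space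
  have hident' : ∀ k, IdentDistrib (P k) (P 0) μ μ := by
    intro k; rw [hP]; exact hident k
  have hindep' : iIndepFun P μ := by
    rw [hP]; exact hindep
  have hXrep : ∀ k ω, X k ω = XFaux φ x0 k (fun i => P i ω) := by
    intro k
    induction k with
    | zero => intro ω; rw [hX0 ω]; rfl
    | succ k ih =>
      intro ω
      have h1 := hrec (k+1) (Nat.le_add_left 1 k) ω
      simp only [Nat.add_sub_cancel] at h1
      rw [h1, ih ω]
      show _ = (φ + (P (k+1) ω).1) * XFaux φ x0 k (fun i => P i ω) + (P (k+1) ω).2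
      rw [hP]
  have hXmeas : ∀ k, Measurable (X k) := by
    intro k
    have : X k = fun ω => XFaux φ x0 k (fun i => P i ω) := funext (hXrep k)
    rw [this]
    exact (XFaux_measurable φ x0 k).comp (measurable_pi_lambda _ fun i => hPmeas i)
  -- the centered truncated variables
  obtain ⟨D, hD⟩ : ∃ D : ℕ → ℕ → Ω → ℝ,
      D = fun c k ω => ftr c (X (k-1) ω) (P k ω) - g c (X (k-1) ω) := ⟨_, rfl⟩
  have hDmeas : ∀ c k, Measurable (D c k) := by
    intro c k; rw [hD]
    exact ((hftr_meas c).comp ((hXmeas (k-1)).prodMk (hPmeas k))).sub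
      ((hgmeas c).comp (hXmeas (k-1)))
  have hDbdd : ∀ c k ω, |D c k ω| ≤ (c:ℝ) + 5 := by
    intro c k ω; rw [hD]
    calc |ftr c (X (k-1) ω) (P k ω) - g c (X (k-1) ω)|
        ≤ |ftr c (X (k-1) ω) (P k ω)| + |g c (X (k-1) ω)| := abs_sub _ _
      _ ≤ (c:ℝ) + 5 := add_le_add (hftr_le_c c _ _) ((hg_bound c _).trans (heps5 c))
  -- orthogonality
  have horth : ∀ c : ℕ, ∀ j k : ℕ, 1 ≤ j → j < k →
      ∫ ω, D c j ω * D c k ω ∂μ = 0 := by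
    intro c j k hj hjk
    have hk1 : 1 ≤ k := hj.trans hjk.le
    -- independence of (D c j, X (k-1)) and P k
    obtain ⟨embed, hembed⟩ : ∃ E : ({x // x ∈ Finset.range k} → ℝ × ℝ) → (ℕ → ℝ × ℝ),
        E = fun t i => if h : i ∈ Finset.range k then t ⟨i, h⟩ else 0 := ⟨_, rfl⟩
    have hembed_meas : Measurable embed := by
      rw [hembed]
      refine measurable_pi_lambda _ fun i => ?_
      by_cases h : i ∈ Finset.range k
      · simp only [dif_pos h]; exact measurable_pi_apply _
      · simp only [dif_neg h]; exact measurable_const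
    obtain ⟨Phi, hPhi⟩ : ∃ F : ({x // x ∈ Finset.range k} → ℝ × ℝ) → ℝ × ℝ,
        F = fun t => (ftr c (XFaux φ x0 (j-1) (embed t)) (embed t j)
            - g c (XFaux φ x0 (j-1) (embed t)), XFaux φ x0 (k-1) (embed t)) := ⟨_, rfl⟩
    have hPhi_meas : Measurable Phi := by
      rw [hPhi]
      have hXj : Measurable (fun t => XFaux φ x0 (j-1) (embed t)) :=
        (XFaux_measurable φ x0 (j-1)).comp hembed_meas
      have hXk : Measurable (fun t => XFaux φ x0 (k-1) (embed t)) :=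
        (XFaux_measurable φ x0 (k-1)).comp hembed_meas
      have hcoordj : Measurable (fun t => embed t j) :=
        (measurable_pi_apply j).comp hembed_meas
      exact (((hftr_meas c).comp (hXj.prodMk hcoordj)).sub ((hgmeas c).comp hXj)).prodMk hXk
    have hPsi_meas : Measurable (fun t : ({x // x ∈ ({k} : Finset ℕ)} → ℝ × ℝ) =>
        t ⟨k, Finset.mem_singleton_self k⟩) := measurable_pi_apply _
    have hdisj : Disjoint (Finset.range k) ({k} : Finset ℕ) := by
      simp [Finset.disjoint_singleton_right]
    have base := hindep'.indepFun_finset (Finset.range k) {k} hdisj hPmeas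
    have hTU : IndepFun (fun ω => (D c j ω, X (k-1) ω)) (P k) μ := by
      have hcomp := base.comp hPhi_meas hPsi_meas
      have h1 : (Phi ∘ fun a (i : {x // x ∈ Finset.range k}) => P i a)
          = fun ω => (D c j ω, X (k-1) ω) := by
        funext ω
        have hagree : ∀ i, i ∈ Finset.range k →
            embed (fun i : {x // x ∈ Finset.range k} => P i ω) i = P i ω := by
          intro i hi; rw [hembed]; dsimp only; rw [dif_pos hi]
        have hXj : XFaux φ x0 (j-1) (embed fun i : {x // x ∈ Finset.range k} => P i ω)
            = X (j-1) ω := by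
          rw [hXrep (j-1)]
          refine XFaux_congr _ _ _ _ _ fun i hi => hagree i ?_
          rw [Finset.mem_range]; omega
        have hXk : XFaux φ x0 (k-1) (embed fun i : {x // x ∈ Finset.range k} => P i ω)
            = X (k-1) ω := by
          rw [hXrep (k-1)]
          refine XFaux_congr _ _ _ _ _ fun i hi => hagree i ?_
          rw [Finset.mem_range]; omega
        have hcj : embed (fun i : {x // x ∈ Finset.range k} => P i ω) j = P j ω :=
          hagree j (Finset.mem_range.2 hjk)
        show Phi _ = _
        rw [hPhi]; dsimp only
        rw [hXj, hXk, hcj, hD]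
      have h2 : ((fun t : ({x // x ∈ ({k} : Finset ℕ)} → ℝ × ℝ) =>
          t ⟨k, Finset.mem_singleton_self k⟩) ∘ fun a (i : {x // x ∈ ({k} : Finset ℕ)}) => P i a)
          = P k := rfl
      rw [h1, h2] at hcomp
      exact hcomp
    -- now Fubini
    have hTmeas : Measurable (fun ω => (D c j ω, X (k-1) ω)) :=
      (hDmeas c j).prodMk (hXmeas (k-1))
    obtain ⟨H, hH⟩ : ∃ H : (ℝ × ℝ) × (ℝ × ℝ) → ℝ,
        H = fun q => q.1.1 * (ftr c q.1.2 q.2 - g c q.1.2) := ⟨_, rfl⟩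
    have hHmeas : Measurable H := by
      rw [hH]
      exact (measurable_fst.comp measurable_fst).mul
        (((hftr_meas c).comp ((measurable_snd.comp measurable_fst).prodMk
          measurable_snd)).sub ((hgmeas c).comp (measurable_snd.comp measurable_fst)))
    haveI h1p : IsProbabilityMeasure (μ.map (fun ω => (D c j ω, X (k-1) ω))) :=
      Measure.isProbabilityMeasure_map hTmeas.aemeasurable
    haveI h2p : IsProbabilityMeasure (μ.map (P 0)) :=
      Measure.isProbabilityMeasure_map (hPmeas 0).aemeasurable
    have hmapP : μ.map (P k) = μ.map (P 0) := (hident' k).map_eq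
    have hprod : μ.map (fun ω => ((D c j ω, X (k-1) ω), P k ω))
        = (μ.map (fun ω => (D c j ω, X (k-1) ω))).prod (μ.map (P 0)) := by
      rw [← hmapP]
      exact (indepFun_iff_map_prod_eq_prod_map_map hTmeas.aemeasurable
        (hPmeas k).aemeasurable).1 hTU
    have hHbound : ∀ q : (ℝ × ℝ) × (ℝ × ℝ), |H q| ≤ |q.1.1| * ((c:ℝ) + 5) := by
      intro q; rw [hH]; dsimp only
      rw [abs_mul]
      refine mul_le_mul_of_nonneg_left ?_ (abs_nonneg _)
      calc |ftr c q.1.2 q.2 - g c q.1.2| ≤ |ftr c q.1.2 q.2| + |g c q.1.2| := abs_sub _ _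
        _ ≤ (c:ℝ) + 5 := add_le_add (hftr_le_c c _ _) ((hg_bound c _).trans (heps5 c))
    have hmaj : Integrable (fun q : (ℝ × ℝ) × (ℝ × ℝ) => |q.1.1| * ((c:ℝ) + 5))
        ((μ.map (fun ω => (D c j ω, X (k-1) ω))).prod (μ.map (P 0))) := by
      have h1 : Integrable (fun t : ℝ × ℝ => |t.1| * ((c:ℝ) + 5))
          (μ.map (fun ω => (D c j ω, X (k-1) ω))) := by
        rw [integrable_map_measure
          ((measurable_fst.abs.mul_const _).aestronglyMeasurable) hTmeas.aemeasurable]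
        refine Integrable.mono' (integrable_const (((c:ℝ)+5) * ((c:ℝ)+5)))
          ((measurable_fst.abs.mul_const _).comp hTmeas).aestronglyMeasurable
          (ae_of_all _ fun ω => ?_)
        simp only [Function.comp_apply]
        rw [Real.norm_eq_abs]
        have h2 := hDbdd c j ω
        have h3 : (0:ℝ) ≤ (c:ℝ) + 5 := by positivity
        rw [abs_mul, abs_abs, abs_of_nonneg h3]
        exact mul_le_mul_of_nonneg_right h2 h3
      have key : Integrable (fun t : ℝ × ℝ => |t.1| * ((c:ℝ) + 5))
          ((((μ.map (fun ω => (D c j ω, X (k-1) ω))).prod (μ.map (P 0)))).map Prod.fst) := by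
        rw [Measure.map_fst_prod]
        simpa [measure_univ, one_smul] using h1
      exact (integrable_map_measure (measurable_fst.abs.mul_const _).aestronglyMeasurable
        measurable_fst.aemeasurable).1 key
    have hHint : Integrable H
        ((μ.map (fun ω => (D c j ω, X (k-1) ω))).prod (μ.map (P 0))) := by
      refine Integrable.mono' hmaj hHmeas.aestronglyMeasurable (ae_of_all _ fun q => ?_)
      rw [Real.norm_eq_abs]; exact hHbound q
    have hinner : ∀ t : ℝ × ℝ, ∫ p, H (t, p) ∂(μ.map (P 0)) = 0 := by
      intro t
      have hHcomp : ∀ p, H (t, p) = t.1 * (ftr c t.2 p - g c t.2) := by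
        intro p; rw [hH]
      rw [integral_congr_ae (ae_of_all _ hHcomp),
        integral_map (hPmeas 0).aemeasurable]
      · have : ∀ ω : Ω, t.1 * (ftr c t.2 (P 0 ω) - g c t.2)
            = t.1 * (ftr c t.2 (P 0 ω)) - t.1 * g c t.2 := fun ω => by ring
        rw [integral_congr_ae (ae_of_all _ this),
          integral_sub ((hftr_int c t.2).const_mul _) (integrable_const _),
          integral_const_mul, integral_const]
        simp only [measure_univ, probReal_univ, ENNReal.toReal_one, one_smul, smul_eq_mul, one_mul]
        rw [hg]; dsimp only; ring
      · exact (measurable_const.mul (((hftr_meas c).comp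
          (measurable_const.prodMk measurable_id)).sub
          measurable_const)).aestronglyMeasurable
    calc ∫ ω, D c j ω * D c k ω ∂μ
        = ∫ ω, H ((D c j ω, X (k-1) ω), P k ω) ∂μ := by
          refine integral_congr_ae (ae_of_all _ fun ω => ?_)
          rw [hH, hD]
      _ = ∫ q, H q ∂(μ.map (fun ω => ((D c j ω, X (k-1) ω), P k ω))) := by
          rw [integral_map (hTmeas.prodMk (hPmeas k)).aemeasurable
            hHmeas.aestronglyMeasurable]
      _ = ∫ q, H q ∂((μ.map (fun ω => (D c j ω, X (k-1) ω))).prod (μ.map (P 0))) := by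
          rw [hprod]
      _ = ∫ t, ∫ p, H (t, p) ∂(μ.map (P 0)) ∂(μ.map (fun ω => (D c j ω, X (k-1) ω))) :=
          integral_prod _ hHint
      _ = 0 := by
          rw [integral_congr_ae (ae_of_all _ hinner)]
          simp

  have horth2 : ∀ (c n : ℕ), ∀ j ∈ Finset.Icc 1 n, ∀ k ∈ Finset.Icc 1 n, j ≠ k →
      ∫ ω, D c j ω * D c k ω ∂μ = 0 := by
    intro c n j hj k hk hne
    rcases lt_or_gt_of_ne hne with h | h
    · exact horth c j k (Finset.mem_Icc.1 hj).1 h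
    · rw [integral_congr_ae (ae_of_all _ fun ω => mul_comm (D c j ω) (D c k ω))]
      exact horth c k j (Finset.mem_Icc.1 hk).1 h
  -- facts about R and G
  have hzck_ident : ∀ (c k : ℕ), IdentDistrib (fun ω => zc c (P k ω))
      (fun ω => zc c (P 0 ω)) μ μ := fun c k => (hident' k).comp (hzc_meas c)
  have hzck_int : ∀ (c k : ℕ), Integrable (fun ω => zc c (P k ω)) μ :=
    fun c k => (hzck_ident c k).integrable_iff.2 (hzcint c)
  have hzck_eq : ∀ (c k : ℕ), ∫ ω, zc c (P k ω) ∂μ = eps c := by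
    intro c k; rw [(hzck_ident c k).integral_eq, heps]
  obtain ⟨R, hR⟩ : ∃ R : ℕ → ℕ → Ω → ℝ,
      R = fun (c k : ℕ) ω => if (c:ℝ) < Z (P k ω) then f (X (k-1) ω) (P k ω) else 0 := ⟨_, rfl⟩
  have hRmeas : ∀ c k, Measurable (R c k) := by
    intro c k; rw [hR]
    exact Measurable.ite (measurableSet_lt measurable_const (hZmeas.comp (hPmeas k)))
      (hfmeas.comp ((hXmeas (k-1)).prodMk (hPmeas k))) measurable_const
  have hRabs : ∀ c k ω, |R c k ω| ≤ zc c (P k ω) := by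
    intro c k ω; rw [hR, hzc]; dsimp only
    rcases lt_or_ge ((c:ℝ)) (Z (P k ω)) with h | h
    · rw [if_pos h, if_pos h]; exact hfZ _ _
    · rw [if_neg (not_lt.2 h), if_neg (not_lt.2 h)]; simp
  have hRint : ∀ c k, Integrable (R c k) μ := by
    intro c k
    refine Integrable.mono' (hzck_int c k) (hRmeas c k).aestronglyMeasurable
      (ae_of_all _ fun ω => ?_)
    rw [Real.norm_eq_abs]; exact hRabs c k ω
  have hRE : ∀ c k, ∫ ω, |R c k ω| ∂μ ≤ eps c := by
    intro c k
    rw [← hzck_eq c k]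
    exact integral_mono (hRint c k).abs (hzck_int c k) fun ω => hRabs c k ω
  have hGmeas : ∀ (c k : ℕ), Measurable fun ω => g c (X (k-1) ω) :=
    fun c k => (hgmeas c).comp (hXmeas (k-1))
  have hGint : ∀ (c k : ℕ), Integrable (fun ω => g c (X (k-1) ω)) μ := by
    intro c k
    refine Integrable.mono' (integrable_const (eps c)) (hGmeas c k).aestronglyMeasurable
      (ae_of_all _ fun ω => ?_)
    rw [Real.norm_eq_abs]; exact hg_bound c _
  have hGE : ∀ (c k : ℕ), ∫ ω, |g c (X (k-1) ω)| ∂μ ≤ eps c := by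
    intro c k
    calc ∫ ω, |g c (X (k-1) ω)| ∂μ ≤ ∫ _ω, eps c ∂μ :=
        integral_mono (hGint c k).abs (integrable_const _) fun ω => hg_bound c _
      _ = eps c := by simp
  have hYD : ∀ (c k : ℕ) (ω : Ω), f (X (k-1) ω) (P k ω)
      = D c k ω + (R c k ω + g c (X (k-1) ω)) := by
    intro c k ω
    rw [hD, hR, hftr]; dsimp only
    rcases le_or_gt (Z (P k ω)) ((c:ℝ)) with h | h
    · rw [if_pos h, if_neg (not_lt.2 h)]; ring
    · rw [if_neg (not_le.2 h), if_pos h]; ring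
  -- final assembly
  intro δ hδ
  have hterm : ∀ (k : ℕ) (ω : Ω), (X (k - 1) ω * b k ω + e k ω)^2
      / (ω2 * (X (k - 1) ω)^2 + σ2) - 1 = f (X (k-1) ω) (P k ω) := by
    intro k ω; rw [hf, hP]
  simp only [hterm]
  rw [ENNReal.tendsto_atTop_zero]
  intro ε' hε'
  obtain ⟨r, hr0, hrε⟩ := ENNReal.lt_iff_exists_nnreal_btwn.1 hε'
  have hr0' : (0:ℝ) < r := by
    have : (0:ℝ≥0) < r := by exact_mod_cast hr0
    exact_mod_cast this
  have hpos : (0:ℝ) < δ*r/8 := by positivity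
  obtain ⟨c, hc⟩ := (hepslim.eventually (gt_mem_nhds hpos)).exists
  obtain ⟨K, hK⟩ : ∃ K : ℝ, K = ((c:ℝ)+5)^2*4/δ^2 := ⟨_, rfl⟩
  have hKpos : 0 ≤ K := by rw [hK]; positivity
  refine ⟨max (Nat.ceil (K/((r:ℝ)/2))) 1, fun n hn => ?_⟩
  have hn1 : 1 ≤ n := le_trans (le_max_right _ 1) hn
  have hnpos : (0:ℝ) < n := by exact_mod_cast hn1
  have hKn : K/((r:ℝ)/2) ≤ (n:ℝ) := by
    refine le_trans (Nat.le_ceil _) ?_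
    exact_mod_cast le_trans (le_max_left _ _) hn
  have hKn2 : K/(n:ℝ) ≤ (r:ℝ)/2 := by
    rw [div_le_iff₀ hnpos]
    have := (div_le_iff₀ (by positivity : (0:ℝ) < (r:ℝ)/2)).1 hKn
    linarith
  have hcard : (Finset.Icc 1 n).card = n := by
    rw [Nat.card_Icc]; omega
  -- Chebyshev part
  have hWmeas : Measurable (fun ω => (1/(n:ℝ)) * ∑ k ∈ Finset.Icc 1 n, D c k ω) :=
    (Finset.measurable_sum _ (fun k _ => hDmeas c k)).const_mul _
  have hWbdd : ∀ ω, |(1/(n:ℝ)) * ∑ k ∈ Finset.Icc 1 n, D c k ω| ≤ (c:ℝ)+5 := by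
    intro ω
    rw [abs_mul, abs_of_pos (by positivity : (0:ℝ) < 1/(n:ℝ))]
    calc (1/(n:ℝ)) * |∑ k ∈ Finset.Icc 1 n, D c k ω|
        ≤ (1/(n:ℝ)) * (n * ((c:ℝ)+5)) := by
          refine mul_le_mul_of_nonneg_left ?_ (by positivity)
          refine (Finset.abs_sum_le_sum_abs _ _).trans ?_
          calc ∑ k ∈ Finset.Icc 1 n, |D c k ω| ≤ ∑ _k ∈ Finset.Icc 1 n, ((c:ℝ)+5) :=
              Finset.sum_le_sum fun k _ => hDbdd c k ω
            _ = n * ((c:ℝ)+5) := by rw [Finset.sum_const, hcard, nsmul_eq_mul]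
      _ = (c:ℝ)+5 := by field_simp
  have hW2int : Integrable (fun ω => ((1/(n:ℝ)) * ∑ k ∈ Finset.Icc 1 n, D c k ω)^2) μ := by
    refine Integrable.mono' (integrable_const (((c:ℝ)+5)^2))
      (hWmeas.pow measurable_const).aestronglyMeasurable (ae_of_all _ fun ω => ?_)
    rw [Real.norm_eq_abs, abs_pow]
    exact pow_le_pow_left₀ (abs_nonneg _) (hWbdd ω) 2
  have hW2mean : ∫ ω, ((1/(n:ℝ)) * ∑ k ∈ Finset.Icc 1 n, D c k ω)^2 ∂μ
      ≤ ((c:ℝ)+5)^2/n := by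
    have h1 : ∀ ω : Ω, ((1/(n:ℝ)) * ∑ k ∈ Finset.Icc 1 n, D c k ω)^2
        = (1/(n:ℝ))^2 * (∑ k ∈ Finset.Icc 1 n, D c k ω)^2 := fun ω => by ring
    rw [integral_congr_ae (ae_of_all _ h1), integral_const_mul]
    have h2 := mylem_sumsq μ (Finset.Icc 1 n) (D c) ((c:ℝ)+5) (by positivity)
      (fun k _ => hDmeas c k) (fun k _ ω => hDbdd c k ω) (horth2 c n)
    rw [hcard] at h2
    calc (1/(n:ℝ))^2 * ∫ ω, (∑ k ∈ Finset.Icc 1 n, D c k ω)^2 ∂μ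
        ≤ (1/(n:ℝ))^2 * ((n:ℝ) * ((c:ℝ)+5)^2) := by
          refine mul_le_mul_of_nonneg_left h2 (by positivity)
      _ = ((c:ℝ)+5)^2/n := by field_simp
  have hA : μ {ω | δ/2 ≤ |(1/(n:ℝ)) * ∑ k ∈ Finset.Icc 1 n, D c k ω|}
      ≤ ENNReal.ofReal ((r:ℝ)/2) := by
    have hsub2 : {ω | δ/2 ≤ |(1/(n:ℝ)) * ∑ k ∈ Finset.Icc 1 n, D c k ω|}
        ⊆ {ω | (δ/2)^2 ≤ ((1/(n:ℝ)) * ∑ k ∈ Finset.Icc 1 n, D c k ω)^2} := by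
      intro ω hω
      simp only [Set.mem_setOf_eq] at hω ⊢
      calc (δ/2)^2 ≤ |(1/(n:ℝ)) * ∑ k ∈ Finset.Icc 1 n, D c k ω|^2 :=
          pow_le_pow_left₀ (by positivity) hω 2
        _ = ((1/(n:ℝ)) * ∑ k ∈ Finset.Icc 1 n, D c k ω)^2 := sq_abs _
    refine (measure_mono hsub2).trans ?_
    refine (mylem_markov μ hW2int (fun ω => sq_nonneg _) (by positivity : (0:ℝ) < (δ/2)^2)).trans ?_
    refine ENNReal.ofReal_le_ofReal ?_
    calc (∫ ω, ((1/(n:ℝ)) * ∑ k ∈ Finset.Icc 1 n, D c k ω)^2 ∂μ)/((δ/2)^2)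
        ≤ (((c:ℝ)+5)^2/n)/((δ/2)^2) := by
          gcongr
      _ = K/(n:ℝ) := by rw [hK]; field_simp; ring
      _ ≤ (r:ℝ)/2 := hKn2
  -- Markov part
  have hRGint : ∀ k, Integrable (fun ω => |R c k ω| + |g c (X (k-1) ω)|) μ := fun k => by
    exact (hRint c k).abs.add (hGint c k).abs
  have hVint : Integrable (fun ω => (1/(n:ℝ)) * ∑ k ∈ Finset.Icc 1 n,
      (|R c k ω| + |g c (X (k-1) ω)|)) μ := by
    refine Integrable.const_mul ?_ _
    exact integrable_finset_sum _ fun k _ => hRGint k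
  have hVmean : ∫ ω, (1/(n:ℝ)) * ∑ k ∈ Finset.Icc 1 n,
      (|R c k ω| + |g c (X (k-1) ω)|) ∂μ ≤ 2 * eps c := by
    rw [integral_const_mul]
    rw [integral_finset_sum _ (fun k _ => hRGint k)]
    calc (1/(n:ℝ)) * ∑ k ∈ Finset.Icc 1 n, ∫ ω, (|R c k ω| + |g c (X (k-1) ω)|) ∂μ
        ≤ (1/(n:ℝ)) * ∑ _k ∈ Finset.Icc 1 n, (2 * eps c) := by
          refine mul_le_mul_of_nonneg_left (Finset.sum_le_sum fun k _ => ?_) (by positivity)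
          rw [integral_add (hRint c k).abs (hGint c k).abs]
          have := hRE c k
          have := hGE c k
          linarith
      _ = (1/(n:ℝ)) * ((n:ℝ) * (2 * eps c)) := by
          rw [Finset.sum_const, hcard, nsmul_eq_mul]
      _ ≤ 2 * eps c := by
          rw [← mul_assoc, one_div, inv_mul_cancel₀ (ne_of_gt hnpos), one_mul]
  have hB : μ {ω | δ/2 ≤ (1/(n:ℝ)) * ∑ k ∈ Finset.Icc 1 n,
      (|R c k ω| + |g c (X (k-1) ω)|)}
      ≤ ENNReal.ofReal ((r:ℝ)/2) := by
    have hVnn : ∀ ω, 0 ≤ (1/(n:ℝ)) * ∑ k ∈ Finset.Icc 1 n,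
        (|R c k ω| + |g c (X (k-1) ω)|) := by
      intro ω; positivity
    refine (mylem_markov μ hVint hVnn (by positivity : (0:ℝ) < δ/2)).trans ?_
    refine ENNReal.ofReal_le_ofReal ?_
    rw [div_le_iff₀ (by positivity : (0:ℝ) < δ/2)]
    calc ∫ ω, (1/(n:ℝ)) * ∑ k ∈ Finset.Icc 1 n,
          (|R c k ω| + |g c (X (k-1) ω)|) ∂μ ≤ 2 * eps c := hVmean
      _ ≤ (r:ℝ)/2 * (δ/2) := by nlinarith [heps_nonneg c]
  -- set inclusion and conclusion
  have hsub : {ω | δ ≤ |(1/(n:ℝ)) * ∑ k ∈ Finset.Icc 1 n, f (X (k-1) ω) (P k ω)|}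
      ⊆ {ω | δ/2 ≤ |(1/(n:ℝ)) * ∑ k ∈ Finset.Icc 1 n, D c k ω|}
        ∪ {ω | δ/2 ≤ (1/(n:ℝ)) * ∑ k ∈ Finset.Icc 1 n,
            (|R c k ω| + |g c (X (k-1) ω)|)} := by
    intro ω hω
    simp only [Set.mem_setOf_eq] at hω
    by_contra hcon
    simp only [Set.mem_union, Set.mem_setOf_eq, not_or, not_le] at hcon
    obtain ⟨h1, h2⟩ := hcon
    have hsum : ∑ k ∈ Finset.Icc 1 n, f (X (k-1) ω) (P k ω)
        = (∑ k ∈ Finset.Icc 1 n, D c k ω)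
          + ∑ k ∈ Finset.Icc 1 n, (R c k ω + g c (X (k-1) ω)) := by
      rw [← Finset.sum_add_distrib]
      exact Finset.sum_congr rfl fun k _ => hYD c k ω
    have habs : |(1/(n:ℝ)) * ∑ k ∈ Finset.Icc 1 n, f (X (k-1) ω) (P k ω)|
        ≤ |(1/(n:ℝ)) * ∑ k ∈ Finset.Icc 1 n, D c k ω|
          + (1/(n:ℝ)) * ∑ k ∈ Finset.Icc 1 n, (|R c k ω| + |g c (X (k-1) ω)|) := by
      rw [hsum, mul_add]
      refine (abs_add_le _ _).trans (add_le_add le_rfl ?_)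
      rw [abs_mul, abs_of_pos (by positivity : (0:ℝ) < 1/(n:ℝ))]
      refine mul_le_mul_of_nonneg_left ?_ (by positivity)
      exact (Finset.abs_sum_le_sum_abs _ _).trans (Finset.sum_le_sum fun k _ => abs_add_le _ _)
    linarith
  calc μ {ω | δ ≤ |(1/(n:ℝ)) * ∑ k ∈ Finset.Icc 1 n, f (X (k-1) ω) (P k ω)|}
      ≤ μ ({ω | δ/2 ≤ |(1/(n:ℝ)) * ∑ k ∈ Finset.Icc 1 n, D c k ω|}
        ∪ {ω | δ/2 ≤ (1/(n:ℝ)) * ∑ k ∈ Finset.Icc 1 n,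
            (|R c k ω| + |g c (X (k-1) ω)|)}) := measure_mono hsub
    _ ≤ μ {ω | δ/2 ≤ |(1/(n:ℝ)) * ∑ k ∈ Finset.Icc 1 n, D c k ω|}
        + μ {ω | δ/2 ≤ (1/(n:ℝ)) * ∑ k ∈ Finset.Icc 1 n,
            (|R c k ω| + |g c (X (k-1) ω)|)} := measure_union_le _ _
    _ ≤ ENNReal.ofReal ((r:ℝ)/2) + ENNReal.ofReal ((r:ℝ)/2) := add_le_add hA hB
    _ = ENNReal.ofReal ((r:ℝ)) := by
        rw [← ENNReal.ofReal_add (by positivity) (by positivity)]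
        norm_num
    _ = (r : ℝ≥0∞) := ENNReal.ofReal_coe_nnreal
    _ ≤ ε' := hrε.le
end
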